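/- For a ∈ J^n \ {0} and any coalition S ⊊ N: the average game of the point-veto game u^a satisfies ũ^a(S) = Π_{i ∈ N\S} (j − a_i)/j if S ∩ N^a ≠ ∅, and ũ^a(S) = 0 if S ∩ N^a = ∅. -/

import Mathlib

open Finset BigOperators

attribute [local instance] Classical.propDecidable

noncomputable section

variable {n j k : ℕ}

/-- The top element `j-1` of `Fin j`. -/
def topF (j : ℕ) [NeZero j] : Fin j :=
  ⟨j - 1, Nat.sub_lt (Nat.pos_of_ne_zero (NeZero.ne j)) one_pos⟩

/-- The profile equal to the constant `c` on `S` and to `x` off `S`. -/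
def mer (S : Finset (Fin n)) (c : Fin j) (x : Fin n → Fin j) : Fin n → Fin j :=
  fun i => if i ∈ S then c else x i

/-- `(j,k)` simple game: `v 0 = 0`, `v (j-1,…,j-1) = k-1`, monotone. -/
def IsJKGame [NeZero j] [NeZero k] (v : (Fin n → Fin j) → Fin k) : Prop :=
  v (fun _ => 0) = 0 ∧ v (fun _ => topF j) = topF k ∧
    ∀ x y : Fin n → Fin j, (∀ i, x i ≤ y i) → v x ≤ v y

/-- The `(j,k)` simple game with point-veto `a`. -/
def uA [NeZero j] [NeZero k] (a : Fin n → Fin j) (x : Fin n → Fin j) : Fin k :=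
  if ∀ i, a i ≤ x i then topF k else 0

/-- The veto game associated with a set `E` of thresholds. -/
def uE [NeZero j] [NeZero k] (E : Set (Fin n → Fin j)) (x : Fin n → Fin j) : Fin k :=
  if ∃ a ∈ E, ∀ i, a i ≤ x i then topF k else 0

/-- Player `i` is a null player of `v`. -/
def NullPlayer [NeZero j] [NeZero k] (v : (Fin n → Fin j) → Fin k) (i : Fin n) : Prop :=
  ∀ (x : Fin n → Fin j) (y : Fin j), v x = v (Function.update x i y)

/-- Players `i` and `h` are equivalent in `v`. -/
def EquivPlayers [NeZero j] [NeZero k] (v : (Fin n → Fin j) → Fin k) (i h : Fin n) : Prop :=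
  ∀ x : Fin n → Fin j, v x = v (x ∘ Equiv.swap i h)

/-- The average game `ṽ(T) = (1/(jⁿ(k-1))) Σ_x [v((j-1)_T, x_{-T}) - v(0_T, x_{-T})]`. -/
def Cfun [NeZero j] [NeZero k] (v : (Fin n → Fin j) → Fin k) (T : Finset (Fin n)) : ℝ :=
  (1 / ((j : ℝ) ^ n * ((k : ℝ) - 1))) *
    ∑ x : Fin n → Fin j,
      (((v (mer T (topF j) x)).val : ℝ) - ((v (mer T 0 x)).val : ℝ))

/-- The Shapley-Shubik index for `(j,k)` simple games. -/
def Phi [NeZero j] [NeZero k] (v : (Fin n → Fin j) → Fin k) (i : Fin n) : ℝ :=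
  ∑ S ∈ univ.filter (fun S : Finset (Fin n) => i ∈ S),
    ((Nat.factorial (S.card - 1) * Nat.factorial (n - S.card) : ℝ) / (Nat.factorial n : ℝ)) *
      (Cfun v S - Cfun v (S.erase i))

/-- The TU game `v_a(S) = (1/(k-1))[v((j-1)_S, a_{-S}) - v(0_S, a_{-S})]`. -/
def vAgame [NeZero j] [NeZero k] (v : (Fin n → Fin j) → Fin k) (a : Fin n → Fin j)
    (S : Finset (Fin n)) : ℝ :=
  (1 / ((k : ℝ) - 1)) * (((v (mer S (topF j) a)).val : ℝ) - ((v (mer S 0 a)).val : ℝ))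

/-- The parametric power index `Φ^a`. -/
def PhiA [NeZero j] [NeZero k] (v : (Fin n → Fin j) → Fin k) (a : Fin n → Fin j) (i : Fin n) : ℝ :=
  ∑ S ∈ univ.filter (fun S : Finset (Fin n) => i ∈ S),
    ((Nat.factorial (S.card - 1) * Nat.factorial (n - S.card) : ℝ) / (Nat.factorial n : ℝ)) *
      (vAgame v a S - vAgame v a (S.erase i))

/-- The game `w^C`: value `k-1` iff all members of `C` give full support. -/
def wCgame [NeZero j] [NeZero k] (C : Finset (Fin n)) : (Fin n → Fin j) → Fin k :=
  uA (fun i => if i ∈ C then topF j else 0)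

/-- The unanimity TU game `γ_S`. -/
def gammaTU (S T : Finset (Fin n)) : ℝ :=
  if S ⊆ T then 1 else 0

end

theorem stmt14 {n j k : ℕ} [NeZero j] [NeZero k] (hj : 2 ≤ j) (hk : 2 ≤ k)
    (a : Fin n → Fin j) (ha : a ≠ 0) (S : Finset (Fin n)) (hS : S ≠ univ) :
    ((∃ i ∈ S, a i ≠ 0) →
        Cfun (uA a : (Fin n → Fin j) → Fin k) S =
          ∏ i ∈ Sᶜ, ((j : ℝ) - ((a i).val : ℝ)) / (j : ℝ)) ∧
    ((∀ i ∈ S, a i = 0) → Cfun (uA a : (Fin n → Fin j) → Fin k) S = 0) := by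
  classical
  have hj0 : (j : ℝ) ≠ 0 := by
    have : (0:ℕ) < j := lt_of_lt_of_le (by norm_num) hj
    exact_mod_cast this.ne'
  have hk1 : (k : ℝ) - 1 ≠ 0 := by
    have : (1:ℝ) < (k:ℝ) := by exact_mod_cast lt_of_lt_of_le (by norm_num) hk
    linarith
  have htopk : (((topF k : Fin k).val : ℝ)) = (k:ℝ) - 1 := by
    simp only [topF]
    have hk1' : 1 ≤ k := le_trans (by norm_num) hk
    push_cast [Nat.cast_sub hk1']
    ring
  have hletop : ∀ y : Fin j, y ≤ topF j := by
    intro y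
    simp only [topF, Fin.le_def]
    exact Nat.le_sub_one_of_lt y.isLt
  constructor
  · rintro ⟨i0, hi0S, hi0⟩
    have hval : ∀ x : Fin n → Fin j,
        (((uA a (mer S (topF j) x) : Fin k).val : ℝ)) -
          (((uA a (mer S 0 x) : Fin k).val : ℝ)) =
        ((k:ℝ) - 1) * ∏ i, (if i ∈ S ∨ a i ≤ x i then (1:ℝ) else 0) := by
      intro x
      have h2 : uA a (mer S 0 x) = (0 : Fin k) := by
        simp only [uA, mer, ite_eq_right_iff]
        refine if_neg ?_
        intro h
        exact absurd (by simpa [hi0S] using h i0) hi0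
      have h1 : uA a (mer S (topF j) x) =
          if ∀ i, i ∈ S ∨ a i ≤ x i then topF k else (0 : Fin k) := by
        simp only [uA, mer]
        congr 1
        apply propext
        constructor
        · intro h i
          by_cases hi : i ∈ S
          · exact Or.inl hi
          · exact Or.inr (by simpa [hi] using h i)
        · intro h i
          by_cases hi : i ∈ S
          · simpa [hi] using hletop (a i)
          · rcases h i with h' | h'
            · exact absurd h' hi
            · simpa [hi] using h'
      rw [h1, h2, Finset.prod_boole]
      by_cases hP : ∀ i, i ∈ S ∨ a i ≤ x i <;> simp [hP, htopk]
    unfold Cfun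
    rw [Finset.sum_congr rfl (fun x _ => hval x), ← Finset.mul_sum]
    have hsum : (∑ x : Fin n → Fin j, ∏ i, (if i ∈ S ∨ a i ≤ x i then (1:ℝ) else 0)) =
        ∏ i, (if i ∈ S then (j:ℝ) else ((j:ℝ) - ((a i).val : ℝ))) := by
      rw [← Fintype.prod_sum (fun i (y : Fin j) => if i ∈ S ∨ a i ≤ y then (1:ℝ) else 0)]
      apply Finset.prod_congr rfl
      intro i _
      by_cases hi : i ∈ S
      · simp [hi, Finset.card_univ]
      · have hy : ∀ y : Fin j, (if i ∈ S ∨ a i ≤ y then (1:ℝ) else 0) =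
            (if a i ≤ y then (1:ℝ) else 0) := by
          intro y; simp [hi]
        rw [Finset.sum_congr rfl (fun y _ => hy y), Finset.sum_boole, if_neg hi]
        have hfil : (Finset.univ.filter fun y : Fin j => a i ≤ y) = Finset.Ici (a i) := by
          ext y; simp
        rw [hfil, Fin.card_Ici, Nat.cast_sub (le_of_lt (a i).isLt)]
    rw [hsum]
    have hprod : (∏ i, (if i ∈ S then (j:ℝ) else ((j:ℝ) - ((a i).val : ℝ)))) =
        (j:ℝ) ^ S.card * ∏ i ∈ Sᶜ, ((j:ℝ) - ((a i).val : ℝ)) := by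
      rw [← Finset.prod_mul_prod_compl S
        (fun i => if i ∈ S then (j:ℝ) else ((j:ℝ) - ((a i).val : ℝ)))]
      congr 1
      · rw [Finset.prod_congr rfl (fun i hi => if_pos hi), Finset.prod_const]
      · exact Finset.prod_congr rfl (fun i hi => if_neg (Finset.mem_compl.mp hi))
    rw [hprod]
    have hRHS : (∏ i ∈ Sᶜ, ((j:ℝ) - ((a i).val : ℝ)) / (j:ℝ)) =
        (∏ i ∈ Sᶜ, ((j:ℝ) - ((a i).val : ℝ))) / (j:ℝ) ^ (Sᶜ).card := by
      rw [Finset.prod_div_distrib, Finset.prod_const]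
    rw [hRHS]
    have hn : S.card + (Sᶜ).card = n := by simp [S.card_add_card_compl]
    have hpow : (j:ℝ) ^ n = (j:ℝ) ^ S.card * (j:ℝ) ^ (Sᶜ).card := by
      rw [← pow_add, hn]
    rw [hpow]
    have hjS : (j:ℝ) ^ S.card ≠ 0 := pow_ne_zero _ hj0
    have hjSc : (j:ℝ) ^ (Sᶜ).card ≠ 0 := pow_ne_zero _ hj0
    field_simp
  · intro hall
    unfold Cfun
    have heq : ∀ x : Fin n → Fin j,
        (uA a (mer S (topF j) x) : Fin k) = uA a (mer S (0 : Fin j) x) := by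
      intro x
      simp only [uA, mer]
      congr 1
      apply propext
      have key : ∀ c : Fin j, (∀ i, a i ≤ (if i ∈ S then c else x i)) ↔
          (∀ i ∉ S, a i ≤ x i) := by
        intro c
        constructor
        · intro h i hi; simpa [hi] using h i
        · intro h i
          by_cases hi : i ∈ S
          · have hc : a i ≤ c := by rw [hall i hi]; simp [Fin.le_def]
            simpa [hi] using hc
          · simpa [hi] using h i hi
      exact (key (topF j)).trans (key 0).symm
    simp [heq]
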